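/- Let G be a finite group and X₁, X₂, X₃ independent random variables with values in G. Suppose G is L⁻¹-quasi-random, i.e., every nontrivial complex irreducible representation of G has dimension greater than |G|^{1/L}. If (H₀(X₁) + H₀(X₂) + H₀(X₃))/3 > (1 − 1/(3L)) log|G|, then the support of X₁X₂X₃ is all of G, i.e., H₀(X₁X₂X₃) = log|G|. -/

import Mathlib

open Pointwise

/-- A finite group `G` is `L⁻¹`-quasi-random if every nontrivial irreducible complex
representation of `G` has dimension greater than `|G|^{1/L}`. -/
def IsQuasiRandom (L : ℕ) (G : Type) [Group G] [Fintype G] : Prop :=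
  ∀ (V : Type) [AddCommGroup V] [Module ℂ V] [FiniteDimensional ℂ V]
    (ρ : Representation ℂ G V),
    (∃ g : G, ρ g ≠ LinearMap.id) →
    (∀ W : Submodule ℂ V, (∀ g : G, W.map (ρ g) ≤ W) → W = ⊥ ∨ W = ⊤) →
    (Fintype.card G : ℝ) ^ ((1 : ℝ) / L) < (Module.finrank ℂ V : ℝ)

noncomputable section
open Finset
open scoped ComplexConjugate
set_option linter.unusedSectionVars false
variable {G : Type} [Group G] [Fintype G] [DecidableEq G]
local notation "𝔼" => EuclideanSpace ℂ G
local notation "⟪" x ", " y "⟫" => @inner ℂ _ _ x y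

def convS (A : Finset G) : 𝔼 →ₗ[ℂ] 𝔼 where
  toFun f := WithLp.toLp 2 (fun x => ∑ a ∈ A, f (a⁻¹ * x))
  map_add' f g := PiLp.ext fun x => by simp [Finset.sum_add_distrib]
  map_smul' c f := PiLp.ext fun x => by simp [Finset.mul_sum]

def convS' (A : Finset G) : 𝔼 →ₗ[ℂ] 𝔼 where
  toFun f := WithLp.toLp 2 (fun x => ∑ a ∈ A, f (a * x))
  map_add' f g := PiLp.ext fun x => by simp [Finset.sum_add_distrib]
  map_smul' c f := PiLp.ext fun x => by simp [Finset.mul_sum]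

lemma convS_apply (A : Finset G) (f : 𝔼) (x : G) : convS A f x = ∑ a ∈ A, f (a⁻¹ * x) := rfl
lemma convS'_apply (A : Finset G) (f : 𝔼) (x : G) : convS' A f x = ∑ a ∈ A, f (a * x) := rfl

lemma conv_adjoint (A : Finset G) (f g : 𝔼) : ⟪convS' A f, g⟫ = ⟪f, convS A g⟫ := by
  simp only [PiLp.inner_apply, RCLike.inner_apply, convS_apply, convS'_apply, map_sum,
    Finset.sum_mul, Finset.mul_sum]
  rw [Finset.sum_comm]
  rw [show (∑ x : G, ∑ a ∈ A, g (a⁻¹ * x) * conj (f x))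
      = ∑ a ∈ A, ∑ x : G, g (a⁻¹ * x) * conj (f x) from Finset.sum_comm]
  refine Finset.sum_congr rfl fun a _ => ?_
  exact Fintype.sum_equiv (Equiv.mulLeft a) _ _
    (fun x => by rw [Equiv.coe_mulLeft, inv_mul_cancel_left])

/-- `T = S' ∘ S`. -/
def convT (A : Finset G) : 𝔼 →ₗ[ℂ] 𝔼 := (convS' A).comp (convS A)

lemma convT_inner (A : Finset G) (f g : 𝔼) : ⟪convT A f, g⟫ = ⟪convS A f, convS A g⟫ :=
  conv_adjoint A (convS A f) g

lemma convT_symm (A : Finset G) : (convT A).IsSymmetric := by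
  intro f g
  rw [convT_inner]
  rw [show (⟪f, convT A g⟫ : ℂ) = conj ⟪convT A g, f⟫ from (inner_conj_symm _ _).symm]
  rw [convT_inner, inner_conj_symm]

/-- Right regular representation. -/
def rreg : Representation ℂ G 𝔼 where
  toFun g :=
    { toFun := fun f => WithLp.toLp 2 (fun x => f (x * g))
      map_add' := fun f h => rfl
      map_smul' := fun c f => rfl }
  map_one' := by
    ext f x
    show f (x * 1) = f x
    rw [mul_one]
  map_mul' g h := by
    ext f x
    show f (x * (g * h)) = f (x * g * h)
    rw [mul_assoc]

lemma rreg_apply (g : G) (f : 𝔼) (x : G) : rreg g f x = f (x * g) := rfl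

lemma rreg_comm_S (A : Finset G) (g : G) (f : 𝔼) :
    convS A (rreg g f) = rreg g (convS A f) := by
  refine PiLp.ext fun x => ?_
  show ∑ a ∈ A, f (a⁻¹ * x * g) = ∑ a ∈ A, f (a⁻¹ * (x * g))
  exact Finset.sum_congr rfl fun a _ => by rw [mul_assoc]

lemma rreg_comm_S' (A : Finset G) (g : G) (f : 𝔼) :
    convS' A (rreg g f) = rreg g (convS' A f) := by
  refine PiLp.ext fun x => ?_
  show ∑ a ∈ A, f (a * x * g) = ∑ a ∈ A, f (a * (x * g))
  exact Finset.sum_congr rfl fun a _ => by rw [mul_assoc]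

lemma rreg_comm_T (A : Finset G) (g : G) (f : 𝔼) :
    convT A (rreg g f) = rreg g (convT A f) := by
  show convS' A (convS A (rreg g f)) = _
  rw [rreg_comm_S, rreg_comm_S']; rfl

/-- The summation functional. -/
def sumFun : 𝔼 →ₗ[ℂ] ℂ where
  toFun f := ∑ x : G, f x
  map_add' f g := by simp [Finset.sum_add_distrib]
  map_smul' c f := by simp [Finset.mul_sum]

lemma sumFun_S (A : Finset G) (f : 𝔼) : sumFun (convS A f) = (A.card : ℂ) * sumFun f := by
  show ∑ x : G, ∑ a ∈ A, f (a⁻¹ * x) = _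
  rw [Finset.sum_comm]
  have h1 : ∀ a ∈ A, ∑ x : G, f (a⁻¹ * x) = sumFun f := fun a _ =>
    Fintype.sum_equiv (Equiv.mulLeft a⁻¹) _ _ (fun x => rfl)
  rw [Finset.sum_congr rfl h1, Finset.sum_const, nsmul_eq_mul]

lemma sumFun_S' (A : Finset G) (f : 𝔼) : sumFun (convS' A f) = (A.card : ℂ) * sumFun f := by
  show ∑ x : G, ∑ a ∈ A, f (a * x) = _
  rw [Finset.sum_comm]
  have h1 : ∀ a ∈ A, ∑ x : G, f (a * x) = sumFun f := fun a _ =>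
    Fintype.sum_equiv (Equiv.mulLeft a) _ _ (fun x => rfl)
  rw [Finset.sum_congr rfl h1, Finset.sum_const, nsmul_eq_mul]

lemma sumFun_rreg (g : G) (f : 𝔼) : sumFun (rreg g f) = sumFun f := by
  exact Fintype.sum_equiv (Equiv.mulRight g) _ _ (fun x => rfl)

lemma norm_sq_eq_sum (v : 𝔼) : ‖v‖ ^ 2 = ∑ x : G, ‖v x‖ ^ 2 := by
  rw [EuclideanSpace.norm_eq, Real.sq_sqrt]
  exact Finset.sum_nonneg fun x _ => sq_nonneg _

lemma convS_entry (A : Finset G) (v : 𝔼) (j : G) :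
    convS A v j = ⟪convS' A (EuclideanSpace.single j (1:ℂ)), v⟫ := by
  rw [conv_adjoint, EuclideanSpace.inner_single_left]
  simp

lemma norm_sq_S'_single (A : Finset G) (j : G) :
    ‖convS' A (EuclideanSpace.single j (1:ℂ))‖ ^ 2 = A.card := by
  rw [norm_sq_eq_sum]
  have key : ∀ x : G, convS' A (EuclideanSpace.single j (1:ℂ)) x
      = if j * x⁻¹ ∈ A then 1 else 0 := by
    intro x
    rw [convS'_apply]
    have : ∀ a ∈ A, EuclideanSpace.single j (1:ℂ) (a * x) = if a = j * x⁻¹ then 1 else 0 := by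
      intro a _
      rw [EuclideanSpace.single_apply]
      congr 1
      simp [eq_comm, eq_mul_inv_iff_mul_eq]
    rw [Finset.sum_congr rfl this, Finset.sum_ite_eq' A (j * x⁻¹) (fun _ => (1:ℂ))]
  have : ∀ x : G, ‖convS' A (EuclideanSpace.single j (1:ℂ)) x‖ ^ 2
      = if j * x⁻¹ ∈ A then (1:ℝ) else 0 := by
    intro x; rw [key]
    by_cases hx : j * x⁻¹ ∈ A <;> simp [hx]
  rw [Finset.sum_congr rfl fun x _ => this x, Finset.sum_ite, Finset.sum_const, Finset.sum_const]
  simp only [nsmul_eq_mul, mul_one, mul_zero, add_zero]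
  congr 1
  have : Finset.univ.filter (fun x => j * x⁻¹ ∈ A) = A.image (fun a => a⁻¹ * j) := by
    ext x
    simp only [Finset.mem_filter, Finset.mem_univ, true_and, Finset.mem_image]
    constructor
    · intro hx; exact ⟨j * x⁻¹, hx, by group⟩
    · rintro ⟨a, ha, rfl⟩; simpa [mul_assoc] using ha
  rw [this, Finset.card_image_of_injective]
  intro a b hab
  have h2 : a⁻¹ * j = b⁻¹ * j := hab
  exact inv_injective (mul_right_cancel h2)

/-- Frobenius-norm / Bessel bound. -/
lemma bessel_bound (A : Finset G) {d : ℕ} (e : Fin d → 𝔼) (he : Orthonormal ℂ e) :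
    ∑ i : Fin d, ‖convS A (e i)‖ ^ 2 ≤ (Fintype.card G : ℝ) * A.card := by
  have step1 : ∀ i, ‖convS A (e i)‖ ^ 2
      = ∑ j : G, ‖⟪e i, convS' A (EuclideanSpace.single j (1:ℂ))⟫‖ ^ 2 := by
    intro i
    rw [norm_sq_eq_sum]
    refine Finset.sum_congr rfl fun j _ => ?_
    rw [convS_entry, ← norm_inner_symm]
  calc ∑ i : Fin d, ‖convS A (e i)‖ ^ 2
      = ∑ i : Fin d, ∑ j : G, ‖⟪e i, convS' A (EuclideanSpace.single j (1:ℂ))⟫‖ ^ 2 :=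
        Finset.sum_congr rfl fun i _ => step1 i
    _ = ∑ j : G, ∑ i : Fin d, ‖⟪e i, convS' A (EuclideanSpace.single j (1:ℂ))⟫‖ ^ 2 :=
        Finset.sum_comm
    _ ≤ ∑ j : G, ‖convS' A (EuclideanSpace.single j (1:ℂ))‖ ^ 2 :=
        Finset.sum_le_sum fun j _ => he.sum_inner_products_le _
    _ = ∑ j : G, (A.card : ℝ) :=
        Finset.sum_congr rfl fun j _ => norm_sq_S'_single A j
    _ = (Fintype.card G : ℝ) * A.card := by
        rw [Finset.sum_const, nsmul_eq_mul, Finset.card_univ]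

def V0 : Submodule ℂ 𝔼 := LinearMap.ker (sumFun (G := G))

lemma mem_V0 {f : 𝔼} : f ∈ V0 (G := G) ↔ sumFun f = 0 := LinearMap.mem_ker

lemma T_maps_V0 (A : Finset G) : ∀ f ∈ V0 (G := G), convT A f ∈ V0 := by
  intro f hf
  refine mem_V0.mpr ?_
  show sumFun (convS' A (convS A f)) = 0
  rw [sumFun_S', sumFun_S, mem_V0.mp hf, mul_zero, mul_zero]

lemma rreg_maps_V0 (g : G) : ∀ f ∈ V0 (G := G), rreg g f ∈ V0 := fun f hf =>
  mem_V0.mpr (by rw [sumFun_rreg, mem_V0.mp hf])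

/-- The constant-one function. -/
def oneF : 𝔼 := WithLp.toLp 2 (fun _ => (1 : ℂ))

lemma sumFun_oneF : sumFun (oneF (G := G)) = (Fintype.card G : ℂ) := by
  show ∑ _x : G, (1:ℂ) = _
  rw [Finset.sum_const, nsmul_eq_mul, mul_one, Finset.card_univ]

lemma inner_oneF_left (g : 𝔼) : ⟪oneF (G := G), g⟫ = sumFun g := by
  simp only [PiLp.inner_apply, RCLike.inner_apply, oneF, map_one, one_mul, mul_one]
  rfl

lemma inner_oneF_right (f : 𝔼) : ⟪f, oneF (G := G)⟫ = conj (sumFun f) := by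
  simp only [PiLp.inner_apply, RCLike.inner_apply, oneF, mul_one, one_mul]
  exact (map_sum (starRingEnd ℂ) _ _).symm

/-- Projection onto mean-zero functions. -/
def projP : 𝔼 →ₗ[ℂ] 𝔼 :=
  LinearMap.id - (((Fintype.card G : ℂ))⁻¹ • (sumFun (G := G))).smulRight (oneF (G := G))

lemma projP_apply (f : 𝔼) :
    projP f = f - ((Fintype.card G : ℂ)⁻¹ * sumFun f) • oneF (G := G) := rfl

lemma projP_maps_V0 (hn : (Fintype.card G : ℂ) ≠ 0) (f : 𝔼) : projP f ∈ V0 (G := G) := by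
  refine mem_V0.mpr ?_
  rw [projP_apply, map_sub, map_smul, sumFun_oneF, smul_eq_mul]
  field_simp; ring

lemma projP_fix {f : 𝔼} (hf : f ∈ V0 (G := G)) : projP f = f := by
  rw [projP_apply, mem_V0.mp hf, mul_zero, zero_smul, sub_zero]

lemma projP_symm (f g : 𝔼) : ⟪projP f, g⟫ = ⟪f, projP g⟫ := by
  rw [projP_apply, projP_apply, inner_sub_left, inner_sub_right, inner_smul_left,
    inner_smul_right, inner_oneF_left, inner_oneF_right]
  congr 1
  rw [map_mul, map_inv₀, Complex.conj_natCast]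
  ring

/-- The compressed operator `P T P`. -/
def opQ (A : Finset G) : 𝔼 →ₗ[ℂ] 𝔼 := projP.comp ((convT A).comp projP)

lemma opQ_apply (A : Finset G) (f : 𝔼) : opQ A f = projP (convT A (projP f)) := rfl

lemma opQ_symm (A : Finset G) : (opQ A).IsSymmetric := by
  intro f g
  rw [opQ_apply, opQ_apply, projP_symm, convT_symm, projP_symm]

lemma opQ_eq_on_V0 (A : Finset G) (hn : (Fintype.card G : ℂ) ≠ 0) {f : 𝔼}
    (hf : f ∈ V0 (G := G)) : opQ A f = convT A f := by
  rw [opQ_apply, projP_fix hf, projP_fix (T_maps_V0 A f hf)]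

/-- The top Rayleigh quotient of `Q`. -/
def muQ (A : Finset G) : ℝ :=
  ⨆ x : { x : 𝔼 // x ≠ 0 }, RCLike.re (⟪opQ A (x : 𝔼), (x : 𝔼)⟫ : ℂ) / ‖(x : 𝔼)‖ ^ 2

lemma nontrivial_E [Nonempty G] : Nontrivial 𝔼 := by
  refine nontrivial_of_ne (EuclideanSpace.single 1 (1:ℂ)) 0 fun h => ?_
  have := congrFun (congrArg WithLp.ofLp h) 1
  rw [EuclideanSpace.single_apply, if_pos rfl] at this
  exact one_ne_zero this

lemma rayleigh_le (A : Finset G) [Nonempty G] {f : 𝔼} (hf : f ≠ 0) :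
    RCLike.re (⟪opQ A f, f⟫ : ℂ) ≤ muQ A * ‖f‖ ^ 2 := by
  have hpos : (0:ℝ) < ‖f‖ ^ 2 := pow_pos (norm_pos_iff.mpr hf) 2
  have bdd : BddAbove (Set.range fun x : { x : 𝔼 // x ≠ 0 } =>
      RCLike.re (⟪opQ A (x : 𝔼), (x : 𝔼)⟫ : ℂ) / ‖(x : 𝔼)‖ ^ 2) := by
    refine ⟨‖LinearMap.toContinuousLinearMap (opQ A)‖, ?_⟩
    rintro y ⟨x, rfl⟩
    have hx : (0:ℝ) < ‖(x : 𝔼)‖ ^ 2 := pow_pos (norm_pos_iff.mpr x.2) 2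
    rw [div_le_iff₀ hx]
    calc RCLike.re (⟪opQ A (x : 𝔼), (x : 𝔼)⟫ : ℂ)
        ≤ ‖(⟪opQ A (x : 𝔼), (x : 𝔼)⟫ : ℂ)‖ := RCLike.re_le_norm _
      _ ≤ ‖opQ A (x : 𝔼)‖ * ‖(x : 𝔼)‖ := norm_inner_le_norm _ _
      _ ≤ (‖LinearMap.toContinuousLinearMap (opQ A)‖ * ‖(x : 𝔼)‖) * ‖(x : 𝔼)‖ := by
          have := (LinearMap.toContinuousLinearMap (opQ A)).le_opNorm (x : 𝔼)
          rw [LinearMap.coe_toContinuousLinearMap'] at this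
          exact mul_le_mul_of_nonneg_right this (norm_nonneg _)
      _ = ‖LinearMap.toContinuousLinearMap (opQ A)‖ * ‖(x : 𝔼)‖ ^ 2 := by ring
  have := le_ciSup bdd (⟨f, hf⟩ : { x : 𝔼 // x ≠ 0 })
  rw [div_le_iff₀ hpos] at this
  exact le_trans this (le_of_eq rfl)

lemma hasEig (A : Finset G) [Nonempty G] :
    Module.End.HasEigenvalue (opQ A) ((muQ A : ℂ)) := by
  haveI := nontrivial_E (G := G)
  exact (opQ_symm A).hasEigenvalue_iSup_of_finiteDimensional

/-- Restriction of the right regular representation to an invariant subspace. -/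
def resRep (W : Submodule ℂ 𝔼) (hW : ∀ g : G, ∀ x ∈ W, rreg g x ∈ W) :
    Representation ℂ G ↥W where
  toFun g := (rreg g).restrict (hW g)
  map_one' := LinearMap.ext fun x => Subtype.ext (by
    show rreg (1:G) (x : 𝔼) = (x : 𝔼)
    rw [map_one]
    rfl)
  map_mul' g h := LinearMap.ext fun x => Subtype.ext (by
    show rreg (g * h) (x : 𝔼) = rreg g (rreg h (x : 𝔼))
    rw [map_mul]
    rfl)

lemma resRep_coe (W : Submodule ℂ 𝔼) (hW : ∀ g : G, ∀ x ∈ W, rreg g x ∈ W) (g : G) (x : ↥W) :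
    ((resRep W hW g x : ↥W) : 𝔼) = rreg g (x : 𝔼) := rfl

/-- From any nonzero invariant subspace of the mean-zero space, quasirandomness yields a
nonzero invariant subspace of large dimension inside it. -/
lemma dim_lower_bound {L : ℕ} (hQR : IsQuasiRandom L G) (W : Submodule ℂ 𝔼)
    (hWne : W ≠ ⊥) (hWV0 : W ≤ V0 (G := G))
    (hWinv : ∀ g : G, ∀ x ∈ W, rreg g x ∈ W) :
    ∃ W₁ : Submodule ℂ 𝔼, W₁ ≤ W ∧ W₁ ≠ ⊥ ∧
      (Fintype.card G : ℝ) ^ ((1 : ℝ) / L) < (Module.finrank ℂ ↥W₁ : ℝ) := by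
  classical
  set S : Set (Submodule ℂ 𝔼) :=
    {U | U ≤ W ∧ U ≠ ⊥ ∧ ∀ g : G, ∀ x ∈ U, rreg g x ∈ U} with hS
  have hWS : W ∈ S := ⟨le_rfl, hWne, hWinv⟩
  set N : Set ℕ := (fun U : Submodule ℂ 𝔼 => Module.finrank ℂ ↥U) '' S with hN
  have hNne : N.Nonempty := ⟨_, W, hWS, rfl⟩
  obtain ⟨W₁, hW₁S, hW₁rank⟩ := Nat.sInf_mem hNne
  have hmin : ∀ U ∈ S, Module.finrank ℂ ↥W₁ ≤ Module.finrank ℂ ↥U := by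
    intro U hU
    have h1 : Module.finrank ℂ ↥W₁ = sInf N := hW₁rank
    rw [h1]
    exact Nat.sInf_le ⟨U, hU, rfl⟩
  obtain ⟨hW₁le, hW₁ne, hW₁inv⟩ := hW₁S
  refine ⟨W₁, hW₁le, hW₁ne, ?_⟩
  have hn0 : (Fintype.card G : ℂ) ≠ 0 := by
    exact_mod_cast Nat.cast_ne_zero.mpr (Fintype.card_ne_zero)
  -- nontriviality of the action on W₁
  have hnontriv : ∃ g : G, resRep W₁ hW₁inv g ≠ LinearMap.id := by
    by_contra htriv
    push_neg at htriv
    obtain ⟨x, hxW, hxne⟩ := Submodule.exists_mem_ne_zero_of_ne_bot hW₁ne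
    have hfix : ∀ g : G, rreg g x = x := by
      intro g
      have := congrArg Subtype.val (LinearMap.congr_fun (htriv g) ⟨x, hxW⟩)
      exact this
    have hconst : ∀ g : G, x g = x 1 := by
      intro g
      have := congrFun (congrArg WithLp.ofLp (hfix g)) 1
      rw [rreg_apply, one_mul] at this
      exact this
    have hsum : sumFun x = 0 := mem_V0.mp (hWV0 (hW₁le hxW))
    have : (Fintype.card G : ℂ) * x 1 = 0 := by
      rw [← hsum]
      show _ = ∑ g : G, x g
      rw [Finset.sum_congr rfl fun g _ => hconst g, Finset.sum_const, nsmul_eq_mul,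
        Finset.card_univ]
    have hx1 : x 1 = 0 := by
      rcases mul_eq_zero.mp this with h | h
      · exact absurd h hn0
      · exact h
    exact hxne (PiLp.ext fun g => by rw [hconst g, hx1]; rfl)
  -- irreducibility of W₁
  have hirr : ∀ U : Submodule ℂ ↥W₁, (∀ g : G, U.map (resRep W₁ hW₁inv g) ≤ U) →
      U = ⊥ ∨ U = ⊤ := by
    intro U hU
    rcases eq_or_ne U ⊥ with h | h
    · exact Or.inl h
    right
    set U' : Submodule ℂ 𝔼 := U.map W₁.subtype with hU'
    have hU'le : U' ≤ W₁ := Submodule.map_subtype_le W₁ U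
    have hU'ne : U' ≠ ⊥ := by
      intro hbot
      apply h
      have := Submodule.map_injective_of_injective (Submodule.injective_subtype W₁)
        (hbot.trans (Submodule.map_bot W₁.subtype).symm)
      exact this
    have hU'inv : ∀ g : G, ∀ x ∈ U', rreg g x ∈ U' := by
      intro g x hx
      obtain ⟨u, hu, rfl⟩ := Submodule.mem_map.mp hx
      refine Submodule.mem_map.mpr ⟨resRep W₁ hW₁inv g u, ?_, (resRep_coe W₁ hW₁inv g u).symm⟩
      exact hU g (Submodule.mem_map.mpr ⟨u, hu, rfl⟩)
    have hU'S : U' ∈ S := ⟨hU'le.trans hW₁le, hU'ne, hU'inv⟩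
    have : U' = W₁ :=
      Submodule.eq_of_le_of_finrank_le hU'le (hmin U' hU'S)
    apply Submodule.map_injective_of_injective (Submodule.injective_subtype W₁)
    rw [Submodule.map_subtype_top]
    exact this
  exact hQR ↥W₁ (resRep W₁ hW₁inv) hnontriv hirr

/-- Trace bound: an eigenvalue of `T` whose eigenspace contains `W₁` is at most `|G||A|/dim W₁`. -/
lemma eig_dim_bound (A : Finset G) (μ : ℝ) (W₁ : Submodule ℂ 𝔼)
    (hμ : ∀ x ∈ W₁, convT A x = (μ : ℂ) • x) :
    μ * (Module.finrank ℂ ↥W₁ : ℝ) ≤ (Fintype.card G : ℝ) * A.card := by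
  set d := Module.finrank ℂ ↥W₁ with hd
  set e := stdOrthonormalBasis ℂ ↥W₁ with he
  set v : Fin d → 𝔼 := fun i => (W₁.subtypeₗᵢ (e i) : 𝔼) with hv
  have hon : Orthonormal ℂ v := e.orthonormal.comp_linearIsometry W₁.subtypeₗᵢ
  have hmem : ∀ i, v i ∈ W₁ := fun i => (e i).2
  have hnorm : ∀ i : Fin d, ‖convS A (v i)‖ ^ 2 = μ := by
    intro i
    have h1 : ‖convS A (v i)‖ ^ 2 = RCLike.re (⟪convT A (v i), v i⟫ : ℂ) := by
      rw [convT_inner]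
      exact (inner_self_eq_norm_sq _).symm
    rw [h1, hμ (v i) (hmem i), inner_smul_left, Complex.conj_ofReal]
    have h2 : RCLike.re (⟪v i, v i⟫ : ℂ) = 1 := by
      rw [inner_self_eq_norm_sq, hon.1 i, one_pow]
    calc RCLike.re ((μ : ℂ) * ⟪v i, v i⟫) = μ * RCLike.re (⟪v i, v i⟫ : ℂ) := by
          exact Complex.re_ofReal_mul _ _
      _ = μ := by rw [h2, mul_one]
  have := bessel_bound A v hon
  rw [Finset.sum_congr rfl fun i _ => hnorm i, Finset.sum_const, nsmul_eq_mul,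
    Finset.card_univ, Fintype.card_fin] at this
  calc μ * (d : ℝ) = (d : ℝ) * μ := mul_comm _ _
    _ ≤ _ := this

set_option maxHeartbeats 2000000 in
theorem gowersAux (L : ℕ) (hL : 0 < L)
    (hQR : IsQuasiRandom L G)
    (A B C : Finset G) (hA : A.Nonempty) (hB : B.Nonempty) (hC : C.Nonempty)
    (h : (1 - 1 / (3 * (L : ℝ))) * Real.log (Fintype.card G) <
      (Real.log A.card + Real.log B.card + Real.log C.card) / 3) :
    A * B * C = Finset.univ := by
  classical
  by_contra hne
  obtain ⟨x₀, hx₀⟩ : ∃ x₀ : G, x₀ ∉ A * B * C := by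
    by_contra hall
    push_neg at hall
    exact hne (Finset.eq_univ_iff_forall.mpr hall)
  have hGpos : 0 < Fintype.card G := Fintype.card_pos
  rcases le_or_gt (Fintype.card G) 1 with hG1 | hG
  · haveI : Subsingleton G := Fintype.card_le_one_iff_subsingleton.mp hG1
    obtain ⟨y, hy⟩ := (hA.mul hB).mul hC
    exact hx₀ (by rwa [Subsingleton.elim x₀ y])
  haveI : Nonempty G := Fintype.card_pos_iff.mp hGpos
  set nR : ℝ := (Fintype.card G : ℝ) with hnR
  set aR : ℝ := (A.card : ℝ) with haR
  set bR : ℝ := (B.card : ℝ) with hbR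
  set cR : ℝ := (C.card : ℝ) with hcR
  have hnpos : (0:ℝ) < nR := by rw [hnR]; exact_mod_cast hGpos
  have hn1 : (1:ℝ) < nR := by rw [hnR]; exact_mod_cast hG
  have hapos : (0:ℝ) < aR := by rw [haR]; exact_mod_cast Finset.card_pos.mpr hA
  have hbpos : (0:ℝ) < bR := by rw [hbR]; exact_mod_cast Finset.card_pos.mpr hB
  have hcpos : (0:ℝ) < cR := by rw [hcR]; exact_mod_cast Finset.card_pos.mpr hC
  have hbn : bR ≤ nR := by
    rw [hbR, hnR]
    exact_mod_cast Finset.card_le_univ B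
  have hn0C : ((Fintype.card G : ℕ) : ℂ) ≠ 0 := Nat.cast_ne_zero.mpr hGpos.ne'
  set β : ℝ := bR / nR with hβ
  have hβpos : 0 < β := div_pos hbpos hnpos
  have hcast : ((B.card : ℂ) / (Fintype.card G : ℂ)) = ((β : ℝ) : ℂ) := by
    rw [hβ, hbR, hnR]
    push_cast
    ring
  -- the balanced indicator of B
  set indB : EuclideanSpace ℂ G := WithLp.toLp 2 (fun x => if x ∈ B then (1:ℂ) else 0) with hindB
  set f : EuclideanSpace ℂ G :=
    indB - ((B.card : ℂ) / (Fintype.card G : ℂ)) • oneF with hfdef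
  have hfx : ∀ x : G,
      f x = (if x ∈ B then (1:ℂ) else 0) - ((B.card : ℂ) / (Fintype.card G : ℂ)) := by
    intro x
    show (if x ∈ B then (1:ℂ) else 0) - ((B.card : ℂ) / (Fintype.card G : ℂ)) * oneF x = _
    rw [show oneF (G := G) x = 1 from rfl, mul_one]
  have hsum_indB : sumFun indB = (B.card : ℂ) := by
    show (∑ x : G, if x ∈ B then (1:ℂ) else 0) = _
    rw [Finset.sum_ite_mem, Finset.univ_inter, Finset.sum_const, nsmul_eq_mul, mul_one]
  have hfV0 : f ∈ V0 (G := G) := by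
    refine mem_V0.mpr ?_
    rw [hfdef, map_sub, map_smul, hsum_indB, sumFun_oneF, smul_eq_mul]
    field_simp; ring
  have hnormf : ‖f‖ ^ 2 ≤ bR := by
    rw [norm_sq_eq_sum]
    have hterm : ∀ x : G, ‖f x‖ ^ 2 = if x ∈ B then (1-β)^2 else β^2 := by
      intro x
      rw [hfx x, hcast]
      by_cases hx : x ∈ B
      · rw [if_pos hx, if_pos hx]
        rw [show (1:ℂ) - ((β:ℝ):ℂ) = (((1 - β : ℝ)):ℂ) by push_cast; ring]
        rw [Complex.norm_real, Real.norm_eq_abs, sq_abs]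
      · rw [if_neg hx, if_neg hx, zero_sub, norm_neg, Complex.norm_real, Real.norm_eq_abs, sq_abs]
    rw [Finset.sum_congr rfl fun x _ => hterm x, Finset.sum_ite,
      Finset.sum_const, Finset.sum_const, Finset.filter_mem_eq_inter, Finset.univ_inter]
    have hcard2 : (Finset.univ.filter (fun x => x ∉ B)).card = Fintype.card G - B.card := by
      rw [Finset.filter_not, Finset.filter_mem_eq_inter, Finset.univ_inter,
        Finset.card_sdiff_of_subset (Finset.subset_univ B), Finset.card_univ]
    rw [hcard2, nsmul_eq_mul, nsmul_eq_mul]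
    have hsub : ((Fintype.card G - B.card : ℕ) : ℝ) = nR - bR := by
      rw [Nat.cast_sub (Finset.card_le_univ B)]
    rw [hsub]
    have hnb : nR * β = bR := by rw [hβ]; field_simp
    nlinarith [hβpos.le, hbpos.le, sq_nonneg β, sq_nonneg (1 - β)]
  -- lower bound for ‖S f‖² from the hole at x₀
  set D : Finset G := C.image (fun cc => x₀ * cc⁻¹) with hD
  have hDcard : D.card = C.card := by
    rw [hD]
    refine Finset.card_image_of_injective _ ?_
    intro u w huw
    have : x₀ * u⁻¹ = x₀ * w⁻¹ := huw
    exact inv_injective (mul_left_cancel this)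
  have hnotB : ∀ x ∈ D, ∀ a ∈ A, a⁻¹ * x ∉ B := by
    intro x hx a ha hmem
    obtain ⟨cc, hcc, rfl⟩ := Finset.mem_image.mp hx
    apply hx₀
    have h1 : a * (a⁻¹ * (x₀ * cc⁻¹)) ∈ A * B := Finset.mul_mem_mul ha hmem
    have h2 : a * (a⁻¹ * (x₀ * cc⁻¹)) * cc ∈ A * B * C := Finset.mul_mem_mul h1 hcc
    rwa [mul_inv_cancel_left, inv_mul_cancel_right] at h2
  have hSfD : ∀ x ∈ D, convS A f x = -((A.card : ℂ) * ((β:ℝ):ℂ)) := by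
    intro x hx
    rw [convS_apply]
    have : ∀ a ∈ A, f (a⁻¹ * x) = -(((β:ℝ)):ℂ) := by
      intro a ha
      rw [hfx, hcast, if_neg (hnotB x hx a ha), zero_sub]
    rw [Finset.sum_congr rfl this, Finset.sum_const, nsmul_eq_mul, mul_neg]
  have hlow : cR * (aR * β)^2 ≤ ‖convS A f‖ ^ 2 := by
    rw [norm_sq_eq_sum]
    have hge : ∑ x ∈ D, ‖convS A f x‖ ^ 2 ≤ ∑ x : G, ‖convS A f x‖ ^ 2 :=
      Finset.sum_le_sum_of_subset_of_nonneg (Finset.subset_univ D)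
        (fun x _ _ => sq_nonneg _)
    refine le_trans (le_of_eq ?_) hge
    have hterm : ∀ x ∈ D, ‖convS A f x‖ ^ 2 = (aR * β)^2 := by
      intro x hx
      rw [hSfD x hx, norm_neg, norm_mul, Complex.norm_natCast, Complex.norm_real,
        Real.norm_eq_abs, abs_of_nonneg hβpos.le, haR]
    rw [Finset.sum_congr rfl hterm, Finset.sum_const, hDcard, nsmul_eq_mul, hcR]
  -- case f = 0 is impossible
  have hf0 : f ≠ 0 := by
    intro h0
    rw [h0, map_zero, norm_zero] at hlow
    nlinarith [sq_nonneg (aR * β), mul_pos hcpos (pow_pos (mul_pos hapos hβpos) 2)]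
  -- Rayleigh bound
  have hQf : opQ A f = convT A f := opQ_eq_on_V0 A hn0C hfV0
  have hTf : ‖convS A f‖ ^ 2 = RCLike.re (⟪convT A f, f⟫ : ℂ) := by
    rw [convT_inner]
    exact (inner_self_eq_norm_sq _).symm
  have hSf_le : ‖convS A f‖ ^ 2 ≤ muQ A * ‖f‖ ^ 2 := by
    rw [hTf, ← hQf]
    exact rayleigh_le A hf0
  have hfn2pos : (0:ℝ) < ‖f‖ ^ 2 := pow_pos (norm_pos_iff.mpr hf0) 2
  have hmupos : 0 < muQ A := by
    have hprod : 0 < muQ A * ‖f‖ ^ 2 :=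
      lt_of_lt_of_le (mul_pos hcpos (pow_pos (mul_pos hapos hβpos) 2)) (hlow.trans hSf_le)
    by_contra hmu
    push_neg at hmu
    have h0 : muQ A * ‖f‖ ^ 2 ≤ 0 :=
      mul_nonpos_iff.mpr (Or.inr ⟨hmu, by positivity⟩)
    linarith
  have hSf_le' : ‖convS A f‖ ^ 2 ≤ muQ A * bR :=
    hSf_le.trans (mul_le_mul_of_nonneg_left hnormf hmupos.le)
  -- eigenvector of Q gives an eigenvector of T inside V0
  obtain ⟨v, hv⟩ := (hasEig A).exists_hasEigenvector
  have hveq : opQ A v = ((muQ A : ℝ) : ℂ) • v := hv.apply_eq_smul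
  have hvne : v ≠ 0 := hv.2
  have hmuC : ((muQ A : ℝ) : ℂ) ≠ 0 := by
    exact_mod_cast Complex.ofReal_ne_zero.mpr hmupos.ne'
  have hvV0 : v ∈ V0 (G := G) := by
    have hv2 : v = ((muQ A : ℝ) : ℂ)⁻¹ • opQ A v := by
      rw [hveq, smul_smul, inv_mul_cancel₀ hmuC, one_smul]
    rw [hv2]
    exact Submodule.smul_mem _ _ (projP_maps_V0 hn0C _)
  have hTv : convT A v = ((muQ A : ℝ) : ℂ) • v := by
    rw [← opQ_eq_on_V0 A hn0C hvV0, hveq]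
  -- the eigenspace intersected with V0
  set W0 : Submodule ℂ (EuclideanSpace ℂ G) :=
    (Module.End.eigenspace (convT A) (((muQ A : ℝ) : ℂ))) ⊓ V0 (G := G) with hW0
  have hW0ne : W0 ≠ ⊥ := by
    rw [Submodule.ne_bot_iff]
    exact ⟨v, ⟨Module.End.mem_eigenspace_iff.mpr hTv, hvV0⟩, hvne⟩
  have hW0inv : ∀ g : G, ∀ x ∈ W0, rreg g x ∈ W0 := by
    rintro g x ⟨hx1, hx2⟩
    constructor
    · refine Module.End.mem_eigenspace_iff.mpr ?_
      rw [rreg_comm_T, Module.End.mem_eigenspace_iff.mp hx1, map_smul]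
    · exact rreg_maps_V0 g x hx2
  obtain ⟨W₁, hW₁le, hW₁ne, hW₁dim⟩ :=
    dim_lower_bound hQR W0 hW0ne inf_le_right hW0inv
  have hμd : muQ A * (Module.finrank ℂ ↥W₁ : ℝ) ≤ nR * aR := by
    rw [hnR, haR]
    exact eig_dim_bound A (muQ A) W₁
      (fun x hx => Module.End.mem_eigenspace_iff.mp (hW₁le hx).1)
  set dR : ℝ := (Module.finrank ℂ ↥W₁ : ℝ) with hdR
  have hddim : nR ^ ((1:ℝ)/(L:ℝ)) < dR := hW₁dim
  have hnL1 : (1:ℝ) ≤ nR ^ ((1:ℝ)/(L:ℝ)) := by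
    have h0 := Real.rpow_le_rpow_of_exponent_le hn1.le
      (show (0:ℝ) ≤ 1/(L:ℝ) by positivity)
    rwa [Real.rpow_zero] at h0
  have hdpos : (0:ℝ) < dR := by linarith
  have h1 : cR * (aR*β)^2 ≤ muQ A * bR := hlow.trans hSf_le'
  have h2 : cR * aR^2 * bR^2 ≤ muQ A * bR * nR^2 := by
    have h2a : cR * (aR*β)^2 * nR^2 ≤ muQ A * bR * nR^2 :=
      mul_le_mul_of_nonneg_right h1 (by positivity)
    calc cR * aR^2 * bR^2 = cR * (aR*β)^2 * nR^2 := by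
          rw [hβ]; field_simp
      _ ≤ muQ A * bR * nR^2 := h2a
  have h3 : cR * aR^2 * bR^2 * dR ≤ nR * aR * (bR * nR^2) := by
    calc cR * aR^2 * bR^2 * dR ≤ (muQ A * bR * nR^2) * dR :=
          mul_le_mul_of_nonneg_right h2 hdpos.le
      _ = (muQ A * dR) * (bR * nR^2) := by ring
      _ ≤ (nR * aR) * (bR * nR^2) := mul_le_mul_of_nonneg_right hμd (by positivity)
  have habcd : aR*bR*cR*dR ≤ nR^3 := by
    have h5 : (aR*bR) * (aR*bR*cR*dR) ≤ (aR*bR) * nR^3 := by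
      calc (aR*bR)*(aR*bR*cR*dR) = cR*aR^2*bR^2*dR := by ring
        _ ≤ nR*aR*(bR*nR^2) := h3
        _ = (aR*bR)*nR^3 := by ring
    exact le_of_mul_le_mul_left h5 (by positivity)
  have hlogsum : Real.log aR + Real.log bR + Real.log cR = Real.log (aR*bR*cR) := by
    rw [Real.log_mul (by positivity) hcpos.ne', Real.log_mul hapos.ne' hbpos.ne']
  have h7 : ((3:ℝ) - 1/(L:ℝ)) * Real.log nR < Real.log (aR*bR*cR) := by
    have hLne : (L:ℝ) ≠ 0 := Nat.cast_ne_zero.mpr hL.ne'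
    have hid : ((3:ℝ) - 1/(L:ℝ)) * Real.log nR
        = 3 * ((1 - 1/(3*(L:ℝ))) * Real.log nR) := by
      field_simp
    rw [hid, ← hlogsum]
    linarith [h]
  have h8 : nR ^ ((3:ℝ) - 1/(L:ℝ)) < aR*bR*cR := by
    have hlogr : Real.log (nR ^ ((3:ℝ) - 1/(L:ℝ))) = ((3:ℝ) - 1/(L:ℝ)) * Real.log nR :=
      Real.log_rpow hnpos _
    have habc : (0:ℝ) < aR*bR*cR := by positivity
    have hrp : (0:ℝ) < nR ^ ((3:ℝ) - 1/(L:ℝ)) := Real.rpow_pos_of_pos hnpos _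
    exact (Real.log_lt_log_iff hrp habc).mp (by rw [hlogr]; exact h7)
  have hfin : nR^(3:ℝ) < nR^(3:ℝ) := by
    calc nR^(3:ℝ) = nR ^ ((3:ℝ) - 1/(L:ℝ)) * nR ^ ((1:ℝ)/(L:ℝ)) := by
          rw [← Real.rpow_add hnpos]; norm_num
      _ < (aR*bR*cR) * dR :=
          mul_lt_mul'' h8 hddim (Real.rpow_pos_of_pos hnpos _).le
            (by positivity)
      _ ≤ nR^3 := habcd
      _ = nR^(3:ℝ) := by rw [← Real.rpow_natCast nR 3]; norm_num
  exact absurd hfin (lt_irrefl _)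

end

/-- **Gowers's theorem.** Let `G` be an `L⁻¹`-quasi-random finite group and
`X₁, X₂, X₃` independent `G`-valued random variables with supports `A, B, C`.  If
`(H₀(X₁) + H₀(X₂) + H₀(X₃))/3 > (1 - 1/(3L)) log |G|`, then the support of `X₁X₂X₃` is all
of `G`, i.e. `A·B·C = G`. -/
theorem stmt10 (L : ℕ) (hL : 0 < L)
    (G : Type) [Group G] [Fintype G] [DecidableEq G]
    (hQR : IsQuasiRandom L G)
    (A B C : Finset G) (hA : A.Nonempty) (hB : B.Nonempty) (hC : C.Nonempty)
    (h : (1 - 1 / (3 * (L : ℝ))) * Real.log (Fintype.card G) <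
      (Real.log A.card + Real.log B.card + Real.log C.card) / 3) :
    A * B * C = Finset.univ :=
  gowersAux L hL hQR A B C hA hB hC h
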